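/- Fix integers m ≥ 2 and ℓ ≥ 1 and subsets (clusters) C_1, …, C_ℓ of {1,…,m} each of cardinality at least 2; for each r let Ω_r := diag(1_{C_r}) − (1/|C_r|) 1_{C_r} 1_{C_r}^T ∈ ℝ^{m×m}. Let M ∈ ℝ^{m×m} be symmetric positive definite, P_r the Moore–Penrose pseudoinverse of Ω_r M Ω_r, E_r := P_r M, F_r := I − E_r, let ρ_1, …, ρ_ℓ be positive reals with Σ_r ρ_r = 1, and set E_ave := Σ_r ρ_r E_r, F_ave := Σ_r ρ_r F_r, β := max{ |λ| : λ is an eigenvalue of F_ave, λ ≠ 1 }. Assume the edge-disjointness condition E_r E_{r'} = 0 for all r ≠ r', and assume the sum of the column spaces of Ω_1, …, Ω_ℓ equals ker 1^T. Then: (a) E_ave x = ρ_r x for every x in the column space of Ω_r; (b) the set of nonzero eigenvalues of E_ave is exactly {ρ_1, …, ρ_ℓ}; (c) m − 1 = Σ_{r=1}^ℓ (|C_r| − 1); (d) β = 1 − min_{r = 1,…,ℓ} ρ_r; in particular, if ρ_r = 1/ℓ for all r and all clusters have the same cardinality c, then β = 1 − 1/ℓ = 1 − (c − 1)/(m − 1).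 -/

import Mathlib

open Matrix

/-- The centering matrix `Ω_C = diag(1_C) − (1/|C|) 1_C 1_Cᵀ` associated with a cluster `C`. -/
noncomputable def Omega {m : ℕ} (C : Finset (Fin m)) : Matrix (Fin m) (Fin m) ℝ :=
  Matrix.diagonal (fun i => if i ∈ C then (1 : ℝ) else 0) -
    (1 / (C.card : ℝ)) • Matrix.vecMulVec (fun i => if i ∈ C then (1 : ℝ) else 0)
      (fun i => if i ∈ C then (1 : ℝ) else 0)

/-- `P` is the Moore–Penrose pseudoinverse of `B`. -/
def IsMP {m : ℕ} (B P : Matrix (Fin m) (Fin m) ℝ) : Prop :=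
  B * P * B = B ∧ P * B * P = P ∧ (B * P)ᵀ = B * P ∧ (P * B)ᵀ = P * B

/-- `lam` is a (complex) eigenvalue of the real matrix `A`. -/
def IsEigenvalue {m : ℕ} (A : Matrix (Fin m) (Fin m) ℝ) (lam : ℂ) : Prop :=
  ∃ v : Fin m → ℂ, v ≠ 0 ∧ (A.map (fun a => (a : ℂ))).mulVec v = lam • v

section Helpers

variable {m : ℕ}

lemma Omega_symm (C : Finset (Fin m)) : (Omega C)ᵀ = Omega C := by
  unfold Omega
  rw [transpose_sub, diagonal_transpose, transpose_smul]
  congr 1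
  ext i j
  simp [vecMulVec_apply, mul_comm]

lemma Omega_apply (C : Finset (Fin m)) (i j : Fin m) :
    Omega C i j = (if i = j then (if i ∈ C then (1:ℝ) else 0) else 0) -
      (1 / (C.card : ℝ)) * ((if i ∈ C then (1:ℝ) else 0) * (if j ∈ C then (1:ℝ) else 0)) := by
  simp [Omega, Matrix.sub_apply, Matrix.smul_apply, diagonal_apply, vecMulVec_apply]

lemma Omega_idem (C : Finset (Fin m)) (h : 0 < C.card) :
    Omega C * Omega C = Omega C := by
  set u : Fin m → ℝ := fun i => if i ∈ C then (1 : ℝ) else 0 with hu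
  have hdd : diagonal u * diagonal u = diagonal u := by
    rw [diagonal_mul_diagonal]
    have : (fun i => u i * u i) = u := by
      funext i; by_cases hi : i ∈ C <;> simp [hu, hi]
    rw [this]
  have hdn : diagonal u * vecMulVec u u = vecMulVec u u := by
    ext i j
    simp only [mul_apply, vecMulVec_apply, diagonal_apply]
    rw [Finset.sum_eq_single i]
    · by_cases hi : i ∈ C <;> simp [hu, hi]
    · intro b _ hb; simp [hb.symm]
    · simp
  have hnd : vecMulVec u u * diagonal u = vecMulVec u u := by
    ext i j
    simp only [mul_apply, vecMulVec_apply, diagonal_apply]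
    rw [Finset.sum_eq_single j]
    · by_cases hj : j ∈ C <;> simp [hu, hj]
    · intro b _ hb; simp [hb]
    · simp
  have hnn : vecMulVec u u * vecMulVec u u = (C.card : ℝ) • vecMulVec u u := by
    ext i j
    simp only [mul_apply, vecMulVec_apply, Matrix.smul_apply, smul_eq_mul]
    have : ∀ k, u i * u k * (u k * u j) = u i * u j * u k := by
      intro k; by_cases hk : k ∈ C <;> simp [hu, hk]
    rw [Finset.sum_congr rfl fun k _ => this k, ← Finset.mul_sum]
    have : ∑ k, u k = (C.card : ℝ) := by
      simp [hu, Finset.sum_ite_mem, Finset.univ_inter]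
    rw [this]; ring
  have hc : (C.card : ℝ) ≠ 0 := Nat.cast_ne_zero.mpr h.ne'
  unfold Omega
  rw [← hu, sub_mul, mul_sub, mul_sub, hdd, Matrix.mul_smul, hdn, Matrix.smul_mul, hnd,
    Matrix.smul_mul, Matrix.mul_smul, hnn]
  ext i j
  simp only [Matrix.sub_apply, Matrix.smul_apply, smul_eq_mul]
  field_simp
  ring

lemma IsMP.unique {B P Q : Matrix (Fin m) (Fin m) ℝ}
    (hP : IsMP B P) (hQ : IsMP B Q) : P = Q := by
  obtain ⟨hP1, hP2, hP3, hP4⟩ := hP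
  obtain ⟨hQ1, hQ2, hQ3, hQ4⟩ := hQ
  have hBP : B * P = B * Q := by
    calc B * P = (B * P)ᵀ := hP3.symm
    _ = (B * Q * B * P)ᵀ := by rw [hQ1]
    _ = (B * P)ᵀ * (B * Q)ᵀ := by
        rw [show B * Q * B * P = (B * Q) * (B * P) by simp only [Matrix.mul_assoc],
          Matrix.transpose_mul]
    _ = B * P * (B * Q) := by rw [hP3, hQ3]
    _ = (B * P * B) * Q := by simp only [Matrix.mul_assoc]
    _ = B * Q := by rw [hP1]
  have hPB : P * B = Q * B := by
    calc P * B = (P * B)ᵀ := hP4.symm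
    _ = (P * (B * Q * B))ᵀ := by rw [hQ1]
    _ = (Q * B)ᵀ * (P * B)ᵀ := by
        rw [show P * (B * Q * B) = (P * B) * (Q * B) by simp only [Matrix.mul_assoc],
          Matrix.transpose_mul]
    _ = Q * B * (P * B) := by rw [hP4, hQ4]
    _ = Q * (B * P * B) := by simp only [Matrix.mul_assoc]
    _ = Q * B := by rw [hP1]
  calc P = P * B * P := hP2.symm
  _ = Q * B * Q := by rw [hPB, Matrix.mul_assoc, hBP, ← Matrix.mul_assoc]
  _ = Q := hQ2

lemma IsMP.transpose_self {B P : Matrix (Fin m) (Fin m) ℝ}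
    (hB : Bᵀ = B) (hP : IsMP B P) : Pᵀ = P := by
  obtain ⟨h1, h2, h3, h4⟩ := hP
  have hPt : IsMP B Pᵀ := by
    refine ⟨?_, ?_, ?_, ?_⟩
    · have := congrArg Matrix.transpose h1
      rwa [Matrix.transpose_mul, Matrix.transpose_mul, hB, ← Matrix.mul_assoc] at this
    · have := congrArg Matrix.transpose h2
      rwa [Matrix.transpose_mul, Matrix.transpose_mul, hB, ← Matrix.mul_assoc] at this
    · calc (B * Pᵀ)ᵀ = P * Bᵀ := by rw [Matrix.transpose_mul, Matrix.transpose_transpose]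
      _ = P * B := by rw [hB]
      _ = (P * B)ᵀ := h4.symm
      _ = Bᵀ * Pᵀ := by rw [Matrix.transpose_mul]
      _ = B * Pᵀ := by rw [hB]
    · calc (Pᵀ * B)ᵀ = Bᵀ * P := by rw [Matrix.transpose_mul, Matrix.transpose_transpose]
      _ = B * P := by rw [hB]
      _ = (B * P)ᵀ := h3.symm
      _ = Pᵀ * Bᵀ := by rw [Matrix.transpose_mul]
      _ = Pᵀ * B := by rw [hB]
  exact IsMP.unique hPt ⟨h1, h2, h3, h4⟩

lemma posdef_cancel {M G : Matrix (Fin m) (Fin m) ℝ} (hM : M.PosDef)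
    (h : Gᵀ * M * G = 0) : G = 0 := by
  ext i j
  have hx : (fun k => G k j) = 0 := by
    by_contra hne
    have hpos := hM.dotProduct_mulVec_pos (x := fun k => G k j) hne
    simp only [star_trivial] at hpos
    have : (Gᵀ * M * G) j j = (fun k => G k j) ⬝ᵥ M.mulVec (fun k => G k j) := by
      simp only [mul_apply, dotProduct, mulVec, transpose_apply, Finset.sum_mul,
        Finset.mul_sum]
      rw [Finset.sum_comm]
      apply Finset.sum_congr rfl; intro a _; apply Finset.sum_congr rfl; intro b _; ring
    rw [h] at this
    simp only [Matrix.zero_apply] at this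
    rw [← this] at hpos
    exact lt_irrefl 0 hpos
  have := congrFun hx i
  simpa using this

lemma key {Ω M P : Matrix (Fin m) (Fin m) ℝ}
    (hΩs : Ωᵀ = Ω) (hΩi : Ω * Ω = Ω) (hM : M.PosDef)
    (hP : IsMP (Ω * M * Ω) P) :
    (P * M) * Ω = Ω ∧ Ω * (P * M) = P * M := by
  have hMt : Mᵀ = M := by
    ext i j
    have := congrFun (congrFun hM.1 i) j
    simpa using this
  set B : Matrix (Fin m) (Fin m) ℝ := Ω * M * Ω with hB
  have hBs : Bᵀ = B := by
    rw [hB, Matrix.transpose_mul, Matrix.transpose_mul, hΩs, hMt, Matrix.mul_assoc]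
  have Pt : Pᵀ = P := IsMP.transpose_self hBs hP
  obtain ⟨h1, h2, h3, h4⟩ := hP
  have hΩB : Ω * B = B := by
    rw [hB, show Ω * (Ω * M * Ω) = (Ω * Ω) * (M * Ω) by simp only [Matrix.mul_assoc], hΩi,
      Matrix.mul_assoc]
  have hΩS : Ω * (B * P) = B * P := by rw [← Matrix.mul_assoc, hΩB]
  have hSΩ : (B * P) * Ω = B * P := by
    calc (B * P) * Ω = ((B * P) * Ω)ᵀᵀ := by rw [Matrix.transpose_transpose]
    _ = (Ωᵀ * (B * P)ᵀ)ᵀ := by rw [Matrix.transpose_mul]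
    _ = (Ω * (B * P))ᵀ := by rw [hΩs, h3]
    _ = (B * P)ᵀ := by rw [hΩS]
    _ = B * P := h3
  have hBS : B * (B * P) = B := by
    have := congrArg Matrix.transpose h1
    rw [Matrix.transpose_mul, hBs, h3] at this
    rwa [← Matrix.mul_assoc] at this ⊢
  have hΩMS : Ω * M * (B * P) = B := by
    calc Ω * M * (B * P) = Ω * M * (Ω * (B * P)) := by rw [hΩS]
    _ = (Ω * M * Ω) * (B * P) := by simp only [Matrix.mul_assoc]
    _ = B * (B * P) := by rw [← hB]
    _ = B := hBS
  have hSMΩ : (B * P) * M * Ω = B := by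
    calc (B * P) * M * Ω = ((B * P) * Ω) * M * Ω := by rw [hSΩ]
    _ = (B * P) * (Ω * M * Ω) := by simp only [Matrix.mul_assoc]
    _ = (B * P) * B := by rw [← hB]
    _ = B := h1
  have hSMS : (B * P) * M * (B * P) = B := by
    calc (B * P) * M * (B * P) = (B * P) * M * (Ω * (B * P)) := by rw [hΩS]
    _ = ((B * P) * M * Ω) * (B * P) := by simp only [Matrix.mul_assoc]
    _ = B * (B * P) := by rw [hSMΩ]
    _ = B := hBS
  have hG : Ω - B * P = 0 := by
    apply posdef_cancel hM
    rw [Matrix.transpose_sub, hΩs, h3, Matrix.sub_mul, Matrix.sub_mul, Matrix.mul_sub,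
      Matrix.mul_sub, hΩMS, hSMΩ, hSMS, ← hB]
    abel
  have hS : B * P = Ω := (sub_eq_zero.mp hG).symm
  have hPB : P * B = Ω := by
    calc P * B = (P * B)ᵀ := h4.symm
    _ = Bᵀ * Pᵀ := by rw [Matrix.transpose_mul]
    _ = B * P := by rw [hBs, Pt]
    _ = Ω := hS
  have hΩP : Ω * P = P := by
    calc Ω * P = (P * B) * P := by rw [hPB]
    _ = P := h2
  have hPΩ : P * Ω = P := by
    calc P * Ω = P * (B * P) := by rw [hS]
    _ = P * B * P := by rw [← Matrix.mul_assoc]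
    _ = P := h2
  refine ⟨?_, ?_⟩
  · calc P * M * Ω = (P * Ω) * M * Ω := by rw [hPΩ]
    _ = P * (Ω * M * Ω) := by simp only [Matrix.mul_assoc]
    _ = P * B := by rw [← hB]
    _ = Ω := hPB
  · rw [← Matrix.mul_assoc, hΩP]

lemma sum_mulVec' {ι : Type*} (s : Finset ι) (A : ι → Matrix (Fin m) (Fin m) ℂ)
    (v : Fin m → ℂ) : (∑ r ∈ s, A r) *ᵥ v = ∑ r ∈ s, (A r) *ᵥ v := by
  ext i
  simp only [mulVec, dotProduct, Matrix.sum_apply, Finset.sum_apply, Finset.sum_mul]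
  rw [Finset.sum_comm]

lemma sum_mulVecR {ι : Type*} (s : Finset ι) (A : ι → Matrix (Fin m) (Fin m) ℝ)
    (v : Fin m → ℝ) : (∑ r ∈ s, A r) *ᵥ v = ∑ r ∈ s, (A r) *ᵥ v := by
  ext i
  simp only [mulVec, dotProduct, Matrix.sum_apply, Finset.sum_apply, Finset.sum_mul]
  rw [Finset.sum_comm]

lemma mapC_mul (A B : Matrix (Fin m) (Fin m) ℝ) :
    ((A * B).map (fun a => (a : ℂ))) = (A.map (fun a => (a : ℂ))) * (B.map (fun a => (a : ℂ))) := by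
  ext i j
  simp only [Matrix.map_apply, mul_apply]
  push_cast
  rfl

lemma mapC_smul (c : ℝ) (A : Matrix (Fin m) (Fin m) ℝ) :
    ((c • A).map (fun a => (a : ℂ))) = (c : ℂ) • (A.map (fun a => (a : ℂ))) := by
  ext i j
  simp only [Matrix.map_apply, Matrix.smul_apply, smul_eq_mul]
  push_cast
  rfl

lemma mapC_sub (A B : Matrix (Fin m) (Fin m) ℝ) :
    ((A - B).map (fun a => (a : ℂ))) = (A.map (fun a => (a : ℂ))) - (B.map (fun a => (a : ℂ))) := by
  ext i j
  simp only [Matrix.map_apply, Matrix.sub_apply]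
  push_cast
  rfl

lemma mapC_one : ((1 : Matrix (Fin m) (Fin m) ℝ).map (fun a => (a : ℂ))) = 1 := by
  ext i j
  by_cases h : i = j <;> simp [Matrix.map_apply, Matrix.one_apply, h]

lemma mapC_sum {ι : Type*} (s : Finset ι) (A : ι → Matrix (Fin m) (Fin m) ℝ) :
    ((∑ r ∈ s, A r).map (fun a => (a : ℂ))) = ∑ r ∈ s, (A r).map (fun a => (a : ℂ)) := by
  ext i j
  simp only [Matrix.map_apply, Matrix.sum_apply]
  push_cast
  rfl

lemma mapC_mulVec (A : Matrix (Fin m) (Fin m) ℝ) (x : Fin m → ℝ) :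
    (A.map (fun a => (a : ℂ))) *ᵥ (fun i => ((x i : ℝ) : ℂ)) = fun i => (((A *ᵥ x) i : ℝ) : ℂ) := by
  ext i
  simp only [mulVec, dotProduct, Matrix.map_apply]
  push_cast
  rfl

/-- the nonzero complex eigenvalues of `Eave` are among the `ρ r`. -/
lemma eigenC {ℓ : ℕ} (E : Fin ℓ → Matrix (Fin m) (Fin m) ℝ) (ρ : Fin ℓ → ℝ)
    (Eave : Matrix (Fin m) (Fin m) ℝ) (hEave : Eave = ∑ r, ρ r • E r)
    (hmul : ∀ s, E s * Eave = ρ s • E s)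
    {lam : ℂ} {v : Fin m → ℂ} (hv : v ≠ 0) (hlam : lam ≠ 0)
    (heig : (Eave.map (fun a => (a : ℂ))) *ᵥ v = lam • v) : ∃ r, (ρ r : ℂ) = lam := by
  by_contra hno
  push_neg at hno
  have hz : ∀ s, ((E s).map (fun a => (a : ℂ))) *ᵥ v = 0 := by
    intro s
    have h1 : ((E s).map (fun a => (a : ℂ))) *ᵥ ((Eave.map (fun a => (a : ℂ))) *ᵥ v)
        = (ρ s : ℂ) • (((E s).map (fun a => (a : ℂ))) *ᵥ v) := by
      rw [mulVec_mulVec, ← mapC_mul, hmul s, mapC_smul, smul_mulVec]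
    rw [heig, mulVec_smul] at h1
    have h2 : ((ρ s : ℂ) - lam) • (((E s).map (fun a => (a : ℂ))) *ᵥ v) = 0 := by
      rw [sub_smul, h1, sub_self]
    rcases smul_eq_zero.mp h2 with h | h
    · exact absurd (by linear_combination h : (ρ s : ℂ) = lam) (hno s)
    · exact h
  have h0 : (Eave.map (fun a => (a : ℂ))) *ᵥ v = 0 := by
    rw [hEave, mapC_sum, sum_mulVec']
    apply Finset.sum_eq_zero
    intro r _
    rw [mapC_smul, smul_mulVec, hz r, smul_zero]
  rw [heig] at h0
  rcases smul_eq_zero.mp h0 with h | h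
  · exact hlam h
  · exact hv h

end Helpers

/-- **optimality of edge-disjoint clusters.** Under the edge-disjointness
condition `E_r E_{r'} = 0` (`r ≠ r'`) and hypergraph connectivity: every vector in the column
space of `Ω_r` is a `ρ_r`-eigenvector of `E_ave`; the nonzero eigenvalues of `E_ave` are exactly
the `ρ_r`; `m − 1 = Σ_r (|C_r| − 1)`; and `β = 1 − min_r ρ_r`, so for uniform probabilities and
equal cluster cardinality `c`, `β = 1 − 1/ℓ = 1 − (c−1)/(m−1)`. -/
theorem edge_disjoint_optimality (m ℓ : ℕ) (hm : 2 ≤ m) (hℓ : 1 ≤ ℓ)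
    (C : Fin ℓ → Finset (Fin m)) (hC : ∀ r, 2 ≤ (C r).card)
    (M : Matrix (Fin m) (Fin m) ℝ) (hM : M.PosDef)
    (P : Fin ℓ → Matrix (Fin m) (Fin m) ℝ)
    (hP : ∀ r, IsMP (Omega (C r) * M * Omega (C r)) (P r))
    (E : Fin ℓ → Matrix (Fin m) (Fin m) ℝ) (hE : ∀ r, E r = P r * M)
    (F : Fin ℓ → Matrix (Fin m) (Fin m) ℝ) (hF : ∀ r, F r = 1 - E r)
    (ρ : Fin ℓ → ℝ) (hρ : ∀ r, 0 < ρ r) (hρsum : ∑ r, ρ r = 1)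
    (Eave Fave : Matrix (Fin m) (Fin m) ℝ)
    (hEave : Eave = ∑ r, ρ r • E r) (hFave : Fave = ∑ r, ρ r • F r)
    (hdisj : ∀ r r', r ≠ r' → E r * E r' = 0)
    (hspan : (⨆ r, LinearMap.range (Omega (C r)).mulVecLin)
        = LinearMap.ker (∑ i : Fin m, (LinearMap.proj i : (Fin m → ℝ) →ₗ[ℝ] ℝ)))
    (β : ℝ)
    (hβ : IsGreatest {b : ℝ | ∃ lam : ℂ,
        IsEigenvalue Fave lam ∧ lam ≠ 1 ∧ b = ‖lam‖} β) :
    -- (a)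
    (∀ r, ∀ x ∈ LinearMap.range (Omega (C r)).mulVecLin, Eave.mulVec x = ρ r • x) ∧
    -- (b)
    ({lam : ℝ | lam ≠ 0 ∧ ∃ v : Fin m → ℝ, v ≠ 0 ∧ Eave.mulVec v = lam • v}
      = Set.range ρ) ∧
    -- (c)
    ((m : ℝ) - 1 = ∑ r, (((C r).card : ℝ) - 1)) ∧
    -- (d)
    (β = 1 - ⨅ r, ρ r) ∧
    (∀ c : ℕ, (∀ r, ρ r = 1 / (ℓ : ℝ)) → (∀ r, (C r).card = c) →
      β = 1 - 1 / (ℓ : ℝ) ∧ β = 1 - ((c : ℝ) - 1) / ((m : ℝ) - 1)) := by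
  haveI : Nonempty (Fin ℓ) := ⟨⟨0, hℓ⟩⟩
  have hcard : ∀ r, 0 < (C r).card := fun r => lt_of_lt_of_le (by norm_num) (hC r)
  have hkey : ∀ r, E r * Omega (C r) = Omega (C r) ∧ Omega (C r) * E r = E r := by
    intro r
    have h := key (Omega_symm (C r)) (Omega_idem (C r) (hcard r)) hM (hP r)
    rw [hE r]; exact h
  have hEΩ : ∀ r, E r * Omega (C r) = Omega (C r) := fun r => (hkey r).1
  have hΩE : ∀ r, Omega (C r) * E r = E r := fun r => (hkey r).2
  have hidem : ∀ r, E r * E r = E r := by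
    intro r
    calc E r * E r = E r * (Omega (C r) * E r) := by rw [hΩE]
    _ = (E r * Omega (C r)) * E r := by rw [Matrix.mul_assoc]
    _ = Omega (C r) * E r := by rw [hEΩ]
    _ = E r := hΩE r
  have hEΩ0 : ∀ r r', r ≠ r' → E r * Omega (C r') = 0 := by
    intro r r' hne
    calc E r * Omega (C r') = E r * (E r' * Omega (C r')) := by rw [hEΩ]
    _ = (E r * E r') * Omega (C r') := by rw [Matrix.mul_assoc]
    _ = 0 := by rw [hdisj r r' hne, Matrix.zero_mul]
  have hEaveΩ : ∀ r, Eave * Omega (C r) = ρ r • Omega (C r) := by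
    intro r
    rw [hEave, Finset.sum_mul, Finset.sum_eq_single r]
    · rw [Matrix.smul_mul, hEΩ]
    · intro b _ hb; rw [Matrix.smul_mul, hEΩ0 b r hb, smul_zero]
    · simp
  have hmul : ∀ s, E s * Eave = ρ s • E s := by
    intro s
    rw [hEave, Finset.mul_sum, Finset.sum_eq_single s]
    · rw [Matrix.mul_smul, hidem]
    · intro b _ hb; rw [Matrix.mul_smul, hdisj s b (Ne.symm hb), smul_zero]
    · simp
  -- part (a)
  have partA : ∀ r, ∀ x ∈ LinearMap.range (Omega (C r)).mulVecLin,
      Eave.mulVec x = ρ r • x := by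
    rintro r x ⟨y, rfl⟩
    simp only [mulVecLin_apply]
    rw [mulVec_mulVec, hEaveΩ r, smul_mulVec]
  -- a nonzero element of each V r
  have hVne : ∀ r, ∃ x, x ∈ LinearMap.range (Omega (C r)).mulVecLin ∧ x ≠ 0 := by
    intro r
    obtain ⟨i, hi⟩ := Finset.card_pos.mp (hcard r)
    refine ⟨(Omega (C r)).mulVecLin (Pi.single i 1), ⟨Pi.single i 1, rfl⟩, ?_⟩
    intro h0
    have h1 := congrFun h0 i
    simp only [mulVecLin_apply, mulVec_single_one, Matrix.col_apply, Pi.zero_apply] at h1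
    rw [Omega_apply] at h1
    simp only [if_pos rfl, hi, if_true, mul_one, one_mul] at h1
    have hc2 : (2:ℝ) ≤ ((C r).card : ℝ) := by exact_mod_cast hC r
    have hcne : ((C r).card : ℝ) ≠ 0 := by linarith
    rw [sub_eq_zero] at h1
    field_simp at h1
    norm_cast at h1
    have := hC r
    omega
  -- part (b)
  have partB : {lam : ℝ | lam ≠ 0 ∧ ∃ v : Fin m → ℝ, v ≠ 0 ∧ Eave.mulVec v = lam • v}
      = Set.range ρ := by
    ext lam
    constructor
    · rintro ⟨hlam, v, hv, heq⟩
      have hvC : (fun i => ((v i : ℝ) : ℂ)) ≠ 0 := by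
        intro h; apply hv; funext i
        have := congrFun h i; simpa using this
      have heigC : (Eave.map (fun a => (a : ℂ))) *ᵥ (fun i => ((v i : ℝ) : ℂ))
          = (lam : ℂ) • (fun i => ((v i : ℝ) : ℂ)) := by
        rw [mapC_mulVec, heq]
        funext i
        simp only [Pi.smul_apply, smul_eq_mul]
        push_cast
        rfl
      obtain ⟨r, hr⟩ := eigenC E ρ Eave hEave hmul hvC
        (by exact_mod_cast hlam) heigC
      exact ⟨r, by exact_mod_cast hr⟩
    · rintro ⟨r, rfl⟩
      obtain ⟨x, hx, hxne⟩ := hVne r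
      exact ⟨(hρ r).ne', x, hxne, partA r x hx⟩
  -- part (c)
  classical
  have hfinV : ∀ r, Module.finrank ℝ ↥(LinearMap.range (Omega (C r)).mulVecLin)
      = (C r).card - 1 := by
    intro r
    obtain ⟨i0, hi0⟩ := Finset.card_pos.mp (hcard r)
    set w : {j // j ∈ (C r).erase i0} → (Fin m → ℝ) :=
      fun j => Pi.single (j : Fin m) 1 - Pi.single i0 1 with hw
    have hcne : ((C r).card : ℝ) ≠ 0 := Nat.cast_ne_zero.mpr (hcard r).ne'
    have hdiffmem : ∀ j : Fin m, j ∈ C r → j ≠ i0 →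
        (Pi.single j 1 - Pi.single i0 1 : Fin m → ℝ)
          ∈ LinearMap.range (Omega (C r)).mulVecLin := by
      intro j hj hji
      refine ⟨Pi.single j 1 - Pi.single i0 1, ?_⟩
      rw [map_sub, mulVecLin_apply, mulVecLin_apply, mulVec_single_one, mulVec_single_one]
      funext k
      simp only [Pi.sub_apply, mul_one, Matrix.col_apply, Omega_apply, Pi.single_apply]
      by_cases hkj : k = j
      · subst hkj
        have hki : k ≠ i0 := hji
        simp [hj, hki, hi0]
      · by_cases hki : k = i0
        · subst hki
          simp only [hi0, hj, hkj, if_true, if_false, ite_true, ite_false, mul_one]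
          ring
        · by_cases hkC : k ∈ C r
          · simp [hkj, hki, hkC, hj, hi0]
          · simp [hkj, hki, hkC, hj, hi0]
    have hwmem : ∀ j, w j ∈ LinearMap.range (Omega (C r)).mulVecLin := by
      rintro ⟨j, hj⟩
      exact hdiffmem j (Finset.mem_of_mem_erase hj) (Finset.ne_of_mem_erase hj)
    have hVw : LinearMap.range (Omega (C r)).mulVecLin ≤ Submodule.span ℝ (Set.range w) := by
      rintro x ⟨y, rfl⟩
      set z : Fin m → ℝ := (Omega (C r)).mulVec y with hz
      have hz1 : ∀ k, k ∉ C r → z k = 0 := by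
        intro k hk
        rw [hz]
        simp only [mulVec, dotProduct, Omega_apply]
        apply Finset.sum_eq_zero
        intro l _
        by_cases hkl : k = l
        · subst hkl; simp [hk]
        · simp [hkl, hk]
      have hz2 : ∑ k, z k = 0 := by
        have hcolsum : ∀ l, ∑ k, Omega (C r) k l = 0 := by
          intro l
          simp only [Omega_apply]
          rw [Finset.sum_sub_distrib]
          have h1 : ∑ k, (if k = l then (if k ∈ C r then (1:ℝ) else 0) else 0)
              = if l ∈ C r then (1:ℝ) else 0 := by
            rw [Finset.sum_ite_eq' Finset.univ l (fun k => if k ∈ C r then (1:ℝ) else 0)]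
            simp
          have h2 : ∑ k, (1 / ((C r).card : ℝ)) *
              ((if k ∈ C r then (1:ℝ) else 0) * (if l ∈ C r then (1:ℝ) else 0))
              = if l ∈ C r then (1:ℝ) else 0 := by
            rw [← Finset.mul_sum, ← Finset.sum_mul]
            have : ∑ k, (if k ∈ C r then (1:ℝ) else 0) = ((C r).card : ℝ) := by
              simp [Finset.sum_ite_mem, Finset.univ_inter]
            rw [this]
            by_cases hl : l ∈ C r
            · simp [hl]; field_simp
            · simp [hl]
          rw [h1, h2, sub_self]
        rw [hz]
        simp only [mulVec, dotProduct]
        rw [Finset.sum_comm]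
        apply Finset.sum_eq_zero
        intro l _
        rw [← Finset.sum_mul, hcolsum l, zero_mul]
      have hzC : ∑ k ∈ C r, z k = 0 := by
        rw [← hz2]
        exact Finset.sum_subset (Finset.subset_univ (C r)) (fun k _ hk => hz1 k hk)
      have hrepr : z = ∑ j ∈ (C r).erase i0, z j • (Pi.single j 1 - Pi.single i0 1 : Fin m → ℝ) := by
        have herase : ∑ j ∈ (C r).erase i0, z j = - z i0 := by
          have := Finset.add_sum_erase (C r) z hi0
          rw [hzC] at this
          linarith
        funext k
        rw [Finset.sum_apply]
        simp only [Pi.smul_apply, Pi.sub_apply, Pi.single_apply, smul_eq_mul, mul_sub]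
        rw [Finset.sum_sub_distrib]
        have hA : ∑ j ∈ (C r).erase i0, z j * (if k = j then (1:ℝ) else 0)
            = if k ∈ (C r).erase i0 then z k else 0 := by
          rw [Finset.sum_congr rfl (fun j _ => by rw [mul_ite, mul_one, mul_zero])]
          exact Finset.sum_ite_eq ((C r).erase i0) k z
        have hB : ∑ j ∈ (C r).erase i0, z j * (if k = i0 then (1:ℝ) else 0)
            = (if k = i0 then (1:ℝ) else 0) * (- z i0) := by
          rw [← Finset.sum_mul, herase]
          ring
        rw [hA, hB]
        by_cases hki : k = i0
        · subst hki
          simp [Finset.notMem_erase]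
        · by_cases hkE : k ∈ (C r).erase i0
          · simp [hkE, hki]
          · have hkC : k ∉ C r := by
              intro hkC
              exact hkE (Finset.mem_erase.mpr ⟨hki, hkC⟩)
            simp [hkE, hki, hz1 k hkC]
      show z ∈ Submodule.span ℝ (Set.range w)
      rw [hrepr]
      apply Submodule.sum_mem
      intro j hj
      apply Submodule.smul_mem
      apply Submodule.subset_span
      exact ⟨⟨j, hj⟩, rfl⟩
    have hspanw : Submodule.span ℝ (Set.range w) = LinearMap.range (Omega (C r)).mulVecLin := by
      apply le_antisymm
      · rw [Submodule.span_le]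
        rintro _ ⟨j, rfl⟩
        exact hwmem j
      · exact hVw
    have hli : LinearIndependent ℝ w := by
      rw [Fintype.linearIndependent_iff]
      intro g hg j
      have hgj := congrFun hg (j : Fin m)
      simp only [Finset.sum_apply, Pi.smul_apply, hw, Pi.sub_apply, Pi.single_apply,
        smul_eq_mul, Pi.zero_apply] at hgj
      have hji : (j : Fin m) ≠ i0 := Finset.ne_of_mem_erase j.2
      rw [Finset.sum_eq_single j] at hgj
      · simpa [hji] using hgj
      · intro b _ hb
        have hbj : (j : Fin m) ≠ (b : Fin m) := fun h => hb ((Subtype.ext h).symm)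
        simp [hbj, hji]
      · simp
    rw [← hspanw, finrank_span_eq_card hli, Fintype.card_coe, Finset.card_erase_of_mem hi0]
  have hid : ∀ a : Fin ℓ, ∀ x ∈ LinearMap.range (Omega (C a)).mulVecLin,
      (E a).mulVecLin x = x := by
    rintro a x ⟨y, rfl⟩
    simp only [mulVecLin_apply, mulVec_mulVec, hEΩ a]
  have hker0 : ∀ a : Fin ℓ, ∀ r, r ≠ a →
      LinearMap.range (Omega (C r)).mulVecLin ≤ LinearMap.ker (E a).mulVecLin := by
    rintro a r hra x ⟨y, rfl⟩
    simp only [LinearMap.mem_ker, mulVecLin_apply, mulVec_mulVec]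
    rw [hEΩ0 a r (Ne.symm hra), zero_mulVec]
  have hdimsum : ∀ s : Finset (Fin ℓ),
      Module.finrank ℝ ↥(⨆ r ∈ s, LinearMap.range (Omega (C r)).mulVecLin)
        = ∑ r ∈ s, Module.finrank ℝ ↥(LinearMap.range (Omega (C r)).mulVecLin) := by
    intro s
    induction s using Finset.induction_on with
    | empty => simp
    | @insert a s ha ih =>
      rw [Finset.iSup_insert, Finset.sum_insert ha, ← ih]
      have hbot : (LinearMap.range (Omega (C a)).mulVecLin)
          ⊓ (⨆ r ∈ s, LinearMap.range (Omega (C r)).mulVecLin) = ⊥ := by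
        rw [eq_bot_iff]
        rintro x ⟨hx1, hx2⟩
        have hle : (⨆ r ∈ s, LinearMap.range (Omega (C r)).mulVecLin)
            ≤ LinearMap.ker (E a).mulVecLin := by
          apply iSup_le
          intro r
          apply iSup_le
          intro hr
          exact hker0 a r (fun h => ha (h ▸ hr))
        have h1 : (E a).mulVecLin x = x := hid a x hx1
        have h2 : (E a).mulVecLin x = 0 := hle hx2
        simp only [Submodule.mem_bot]
        rw [← h1, h2]
      have := Submodule.finrank_sup_add_finrank_inf_eq
        (LinearMap.range (Omega (C a)).mulVecLin)
        (⨆ r ∈ s, LinearMap.range (Omega (C r)).mulVecLin)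
      rw [hbot, finrank_bot, add_zero] at this
      exact this
  have hunion : Module.finrank ℝ ↥(⨆ r, LinearMap.range (Omega (C r)).mulVecLin)
      = ∑ r, Module.finrank ℝ ↥(LinearMap.range (Omega (C r)).mulVecLin) := by
    have h := hdimsum Finset.univ
    have : (⨆ r ∈ Finset.univ, LinearMap.range (Omega (C r)).mulVecLin)
        = ⨆ r, LinearMap.range (Omega (C r)).mulVecLin := by
      simp
    rw [this] at h
    exact h
  -- finrank of the kernel of the sum functional
  have hkerrank : Module.finrank ℝ
      ↥(LinearMap.ker (∑ i : Fin m, (LinearMap.proj i : (Fin m → ℝ) →ₗ[ℝ] ℝ))) = m - 1 := by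
    set f : (Fin m → ℝ) →ₗ[ℝ] ℝ := ∑ i : Fin m, (LinearMap.proj i : (Fin m → ℝ) →ₗ[ℝ] ℝ)
      with hf
    have hfapp : ∀ x : Fin m → ℝ, f x = ∑ i, x i := by
      intro x
      rw [hf]
      simp [LinearMap.sum_apply]
    have hsurj : Function.Surjective f := by
      intro t
      refine ⟨fun _ => t / m, ?_⟩
      rw [hfapp]
      rw [Finset.sum_const, Finset.card_univ, Fintype.card_fin]
      have hm0 : (m:ℝ) ≠ 0 := by
        have : 0 < m := by omega
        exact Nat.cast_ne_zero.mpr this.ne'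
      rw [nsmul_eq_mul]
      field_simp
    have hrange : LinearMap.range f = ⊤ := LinearMap.range_eq_top.mpr hsurj
    have := LinearMap.finrank_range_add_finrank_ker f
    rw [hrange] at this
    rw [finrank_top] at this
    rw [Module.finrank_self, Module.finrank_pi] at this
    simp only [Fintype.card_fin] at this
    omega
  have hnat : m - 1 = ∑ r, ((C r).card - 1) := by
    have h1 := hunion
    rw [hspan, hkerrank] at h1
    rw [h1]
    exact Finset.sum_congr rfl (fun r _ => hfinV r)
  have partC : (m : ℝ) - 1 = ∑ r, (((C r).card : ℝ) - 1) := by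
    have h1le : 1 ≤ m := by omega
    calc (m:ℝ) - 1 = ((m - 1 : ℕ) : ℝ) := by
          rw [Nat.cast_sub h1le]; norm_num
    _ = ((∑ r, ((C r).card - 1) : ℕ) : ℝ) := by rw [hnat]
    _ = ∑ r, (((C r).card : ℝ) - 1) := by
        rw [Nat.cast_sum]
        apply Finset.sum_congr rfl
        intro r _
        rw [Nat.cast_sub (by have := hC r; omega : 1 ≤ (C r).card)]
        norm_num
  -- part (d)
  have hFE : Fave = 1 - Eave := by
    rw [hFave, hEave]
    have hterm : ∀ r : Fin ℓ, ρ r • F r = ρ r • (1 : Matrix (Fin m) (Fin m) ℝ) - ρ r • E r := by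
      intro r; rw [hF r, smul_sub]
    rw [Finset.sum_congr rfl (fun r _ => hterm r), Finset.sum_sub_distrib, ← Finset.sum_smul,
      hρsum, one_smul]
  have hρle1 : ∀ r, ρ r ≤ 1 := by
    intro r
    rw [← hρsum]
    exact Finset.single_le_sum (fun r' _ => (hρ r').le) (Finset.mem_univ r)
  have hFaveEigen : ∀ r, IsEigenvalue Fave (1 - (ρ r : ℂ)) := by
    intro r
    obtain ⟨x, hxmem, hxne⟩ := hVne r
    have hx : Eave *ᵥ x = ρ r • x := partA r x hxmem
    refine ⟨fun i => ((x i : ℝ) : ℂ), ?_, ?_⟩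
    · intro h
      apply hxne
      funext i
      have := congrFun h i
      simpa using this
    · show (Fave.map (fun a => (a : ℂ))) *ᵥ _ = _
      rw [hFE, mapC_sub, mapC_one, sub_mulVec, one_mulVec, mapC_mulVec, hx]
      funext i
      simp only [Pi.sub_apply, Pi.smul_apply, smul_eq_mul]
      push_cast
      ring
  have hmemS : ∀ r, (1 - ρ r) ∈ {b : ℝ | ∃ lam : ℂ,
      IsEigenvalue Fave lam ∧ lam ≠ 1 ∧ b = ‖lam‖} := by
    intro r
    refine ⟨1 - (ρ r : ℂ), hFaveEigen r, ?_, ?_⟩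
    · intro h
      have h2 : (ρ r : ℂ) = 0 := by linear_combination -h
      have : ρ r = 0 := by exact_mod_cast h2
      exact (hρ r).ne' this
    · rw [show (1 : ℂ) - (ρ r : ℂ) = ((1 - ρ r : ℝ) : ℂ) by push_cast; ring,
        Complex.norm_real, Real.norm_eq_abs, abs_of_nonneg (by linarith [hρle1 r])]
  have hub : ∀ b ∈ {b : ℝ | ∃ lam : ℂ,
      IsEigenvalue Fave lam ∧ lam ≠ 1 ∧ b = ‖lam‖}, b ≤ 1 - ⨅ r, ρ r := by
    rintro b ⟨lam, ⟨v, hv, hveq⟩, hlam1, rfl⟩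
    have hveq' : (Eave.map (fun a => (a : ℂ))) *ᵥ v = (1 - lam) • v := by
      have h1 : (Fave.map (fun a => (a : ℂ))) *ᵥ v = lam • v := hveq
      rw [hFE, mapC_sub, mapC_one, sub_mulVec, one_mulVec] at h1
      have h2 := congrArg (fun z => v - z) h1
      simp only [sub_sub_cancel] at h2
      rw [h2, sub_smul, one_smul]
    have h1lam : (1 : ℂ) - lam ≠ 0 := sub_ne_zero.mpr (Ne.symm hlam1)
    obtain ⟨r, hr⟩ := eigenC E ρ Eave hEave hmul hv h1lam hveq'
    have hlam : lam = ((1 - ρ r : ℝ) : ℂ) := by push_cast; linear_combination hr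
    rw [hlam, Complex.norm_real, Real.norm_eq_abs, abs_of_nonneg (by linarith [hρle1 r])]
    have hinfle : (⨅ r, ρ r) ≤ ρ r := ciInf_le (Finite.bddBelow_range ρ) r
    linarith
  obtain ⟨r0, hr0⟩ := exists_eq_ciInf_of_finite (f := ρ)
  have hG : IsGreatest {b : ℝ | ∃ lam : ℂ,
      IsEigenvalue Fave lam ∧ lam ≠ 1 ∧ b = ‖lam‖} (1 - ⨅ r, ρ r) := by
    constructor
    · rw [← hr0]
      exact hmemS r0
    · exact hub
  have partD : β = 1 - ⨅ r, ρ r := hβ.unique hG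
  refine ⟨partA, partB, partC, partD, ?_⟩
  -- part (e)
  intro c hρu hcu
  have hinf : (⨅ r, ρ r) = 1 / (ℓ : ℝ) := by
    rw [show ρ = fun _ => 1 / (ℓ : ℝ) from funext hρu]
    exact ciInf_const
  have hβ1 : β = 1 - 1 / (ℓ : ℝ) := by rw [partD, hinf]
  refine ⟨hβ1, ?_⟩
  have hceq : ∑ r : Fin ℓ, (((C r).card : ℝ) - 1) = (ℓ : ℝ) * ((c : ℝ) - 1) := by
    rw [Finset.sum_congr rfl (fun r _ => by rw [hcu r])]
    rw [Finset.sum_const, Finset.card_univ, Fintype.card_fin, nsmul_eq_mul]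
  have hm1 : (m : ℝ) - 1 = (ℓ : ℝ) * ((c : ℝ) - 1) := by rw [partC, hceq]
  have hc2 : 2 ≤ c := by
    have := hC ⟨0, hℓ⟩
    rw [hcu ⟨0, hℓ⟩] at this
    exact this
  have hcne : (c : ℝ) - 1 ≠ 0 := by
    have : (2 : ℝ) ≤ (c : ℝ) := by exact_mod_cast hc2
    linarith
  have hlne : (ℓ : ℝ) ≠ 0 := Nat.cast_ne_zero.mpr (by omega)
  rw [hβ1, hm1]
  congr 1
  rw [eq_div_iff (by exact mul_ne_zero hlne hcne)]
  field_simp
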